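/- There is an isomorphism of R-algebras R[v_2,…,v_m, u]/(u·(2v_m + Σ_{i=2}^{m−1} v_i v_{m+1−i}) − r) ≅ R[a, b, s_2,…,s_{m−1}]/(a·b − r). (This is the content of Remark 4.3(b): for 2ℓ+1 ≤ i_0 ≤ n the affine chart U_{i_0} of the splitting model already has semi-stable reduction, its special fiber being the union of the two smooth divisors u = 0 and V_2ᵗHV_2 = 0.) -/

import Mathlib

/-!
STATEMENT 9: There is an `R`-algebra isomorphism
`R[v₂,…,vₘ,u]/(u·(2vₘ + Σ_{i=2}^{m−1} vᵢ v_{m+1−i}) − r) ≅ R[a,b,s₂,…,s_{m−1}]/(a·b − r)`.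
Both sides are polynomial rings in `m` variables, modeled on `MvPolynomial (Fin m) R`:
on the left `u = X 0` and `vᵢ = X (i−1)` for `2 ≤ i ≤ m`; on the right `a = X 0`,
`b = X 1`, and `sᵢ = X i` for `2 ≤ i ≤ m−1` are the remaining free variables.
-/

open MvPolynomial

section ChartAux

variable {R : Type*} [CommRing R]

noncomputable def chartS (m : ℕ) : MvPolynomial (Fin m) R :=
  ∑ i ∈ (Finset.Ico 2 m).attach,
    X (⟨i.1, by have h := i.2; rw [Finset.mem_Ico] at h; omega⟩ : Fin m) *
      X (⟨m + 1 - i.1, by have h := i.2; rw [Finset.mem_Ico] at h; omega⟩ : Fin m)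

noncomputable def chartQ (m : ℕ) (hm : 2 ≤ m) : MvPolynomial (Fin m) R :=
  2 * X (⟨m - 1, by have _ : (0 : R) = 0 := rfl; omega⟩ : Fin m) +
    ∑ i ∈ (Finset.Ico 2 m).attach,
      X (⟨i.1 - 1, by obtain ⟨h1, h2⟩ := Finset.mem_Ico.mp i.2; omega⟩ : Fin m) *
        X (⟨m - i.1, by obtain ⟨h1, h2⟩ := Finset.mem_Ico.mp i.2; omega⟩ : Fin m)

noncomputable def chartF (m : ℕ) (t : R) (j : Fin m) : MvPolynomial (Fin m) R :=
  if h0 : j.1 = 0 then X j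
  else if h1 : j.1 = m - 1 then C t * (X ⟨1, by have := j.2; omega⟩ - chartS m)
  else X ⟨j.1 + 1, by have := j.2; omega⟩

noncomputable def chartG (m : ℕ) (hm : 2 ≤ m) (j : Fin m) : MvPolynomial (Fin m) R :=
  if j.1 = 0 then X j
  else if j.1 = 1 then chartQ m hm
  else X ⟨j.1 - 1, by have := j.2; omega⟩

lemma chartF_zero (m : ℕ) (t : R) (h : 0 < m) :
    chartF m t ⟨0, h⟩ = X ⟨0, h⟩ := by
  simp only [chartF, Fin.val_mk]; rw [dif_pos trivial]

lemma chartF_last (m : ℕ) (t : R) (hm : 2 ≤ m) :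
    chartF m t ⟨m - 1, by have _ : (0 : R) = 0 := rfl; omega⟩ = C t * (X ⟨1, by have _ : (0 : R) = 0 := rfl; omega⟩ - chartS m) := by
  simp only [chartF, Fin.val_mk]
  rw [dif_neg (by omega), dif_pos trivial]

lemma chartF_mid (m : ℕ) (t : R) (k : ℕ) (h1 : 1 ≤ k) (h2 : k + 1 < m) :
    chartF m t ⟨k, by omega⟩ = X ⟨k + 1, h2⟩ := by
  simp only [chartF, Fin.val_mk]
  rw [dif_neg (by omega), dif_neg (by omega)]

lemma chartG_zero (m : ℕ) (hm : 2 ≤ m) (h : 0 < m) :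
    chartG (R := R) m hm ⟨0, h⟩ = X ⟨0, h⟩ := by
  simp only [chartG, Fin.val_mk]; rw [if_pos trivial]

lemma chartG_one (m : ℕ) (hm : 2 ≤ m) :
    chartG (R := R) m hm ⟨1, by have _ : (0 : R) = 0 := rfl; omega⟩ = chartQ m hm := by
  simp only [chartG, Fin.val_mk]
  rw [if_neg (by omega), if_pos trivial]

lemma chartG_mid (m : ℕ) (hm : 2 ≤ m) (k : ℕ) (h1 : 2 ≤ k) (h2 : k < m) :
    chartG (R := R) m hm ⟨k, h2⟩ = X ⟨k - 1, by omega⟩ := by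
  simp only [chartG, Fin.val_mk]
  rw [if_neg (by omega), if_neg (by omega)]

lemma aeval_g_sum (m : ℕ) (hm : 2 ≤ m) :
    aeval (chartG m hm) (chartS m (R := R)) =
      (chartQ m hm : MvPolynomial (Fin m) R) - 2 * X ⟨m - 1, by have _ : (0 : R) = 0 := rfl; omega⟩ := by
  rw [chartQ, add_sub_cancel_left, chartS, map_sum]
  refine Finset.sum_congr rfl fun i _ => ?_
  have h := i.2; rw [Finset.mem_Ico] at h
  rw [map_mul, aeval_X, aeval_X,
    chartG_mid m hm i.1 (by omega) (by omega),
    chartG_mid m hm (m + 1 - i.1) (by omega) (by omega)]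
  congr 2 <;> simp only [Fin.mk.injEq] <;> omega

lemma aeval_f_sum (m : ℕ) (hm : 2 ≤ m) (t : R) :
    aeval (chartF m t)
      (∑ i ∈ (Finset.Ico 2 m).attach,
        X (⟨i.1 - 1, by obtain ⟨h1, h2⟩ := Finset.mem_Ico.mp i.2; omega⟩ : Fin m) *
          X (⟨m - i.1, by obtain ⟨h1, h2⟩ := Finset.mem_Ico.mp i.2; omega⟩ : Fin m)
        : MvPolynomial (Fin m) R)
      = chartS m := by
  rw [chartS, map_sum]
  refine Finset.sum_congr rfl fun i _ => ?_
  have h := i.2; rw [Finset.mem_Ico] at h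
  rw [map_mul, aeval_X, aeval_X,
    chartF_mid m t (i.1 - 1) (by omega) (by omega),
    chartF_mid m t (m - i.1) (by omega) (by omega)]
  congr 2 <;> simp only [Fin.mk.injEq] <;> omega

lemma aeval_f_Q (m : ℕ) (hm : 2 ≤ m) (t : R) (ht : 2 * t = 1) :
    aeval (chartF m t) (chartQ m hm (R := R)) = X ⟨1, by have _ : (0 : R) = 0 := rfl; omega⟩ := by
  rw [chartQ, map_add, map_mul, aeval_X, aeval_f_sum m hm t, chartF_last m t hm]
  rw [show ((aeval (chartF m t)) 2 : MvPolynomial (Fin m) R) = C 2 from by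
      rw [map_ofNat, map_ofNat],
    ← mul_assoc, ← C_mul, ht, C_1, one_mul, sub_add_cancel]



lemma comp_gf (m : ℕ) (hm : 2 ≤ m) (t : R) (ht : 2 * t = 1) :
    (aeval (chartG m hm)).comp (aeval (chartF m t)) =
      AlgHom.id R (MvPolynomial (Fin m) R) := by
  refine MvPolynomial.algHom_ext fun j => ?_
  obtain ⟨k, hk⟩ := j
  simp only [AlgHom.comp_apply, aeval_X, AlgHom.id_apply]
  rcases Nat.eq_zero_or_pos k with h0 | h0
  · subst h0
    rw [chartF_zero, aeval_X, chartG_zero]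
  rcases eq_or_ne k (m - 1) with h1 | h1
  · rw [show (⟨k, hk⟩ : Fin m) = ⟨m - 1, by omega⟩ from by
      simp only [Fin.mk.injEq]; omega]
    rw [chartF_last m t hm, map_mul, map_sub, aeval_C, aeval_X, aeval_g_sum m hm,
      chartG_one m hm, sub_sub_cancel, ← mul_assoc, MvPolynomial.algebraMap_eq]
    rw [show (C t : MvPolynomial (Fin m) R) * 2 = 1 from by
      rw [show (2 : MvPolynomial (Fin m) R) = C 2 from by rw [map_ofNat],
        ← C_mul, mul_comm, ht, C_1]]
    rw [one_mul]
  · rw [show (⟨k, hk⟩ : Fin m) = ⟨k, by omega⟩ from rfl,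
      chartF_mid m t k (by omega) (by omega), aeval_X,
      chartG_mid m hm (k + 1) (by omega) (by omega)]
    refine congrArg X (Fin.ext ?_)
    show k + 1 - 1 = k
    omega

lemma comp_fg (m : ℕ) (hm : 2 ≤ m) (t : R) (ht : 2 * t = 1) :
    (aeval (chartF m t)).comp (aeval (chartG m hm)) =
      AlgHom.id R (MvPolynomial (Fin m) R) := by
  refine MvPolynomial.algHom_ext fun j => ?_
  obtain ⟨k, hk⟩ := j
  simp only [AlgHom.comp_apply, aeval_X, AlgHom.id_apply]
  rcases Nat.eq_zero_or_pos k with h0 | h0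
  · subst h0
    rw [chartG_zero, aeval_X, chartF_zero]
  rcases eq_or_ne k 1 with h1 | h1
  · subst h1
    rw [chartG_one m hm, aeval_f_Q m hm t ht]
  · rw [chartG_mid m hm k (by omega) hk, aeval_X,
      chartF_mid m t (k - 1) (by omega) (by omega)]
    refine congrArg X (Fin.ext ?_)
    show k - 1 + 1 = k
    omega

noncomputable def chartEquiv (m : ℕ) (hm : 2 ≤ m) (t : R) (ht : 2 * t = 1) :
    MvPolynomial (Fin m) R ≃ₐ[R] MvPolynomial (Fin m) R :=
  AlgEquiv.ofAlgHom (aeval (chartF m t)) (aeval (chartG m hm))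
    (comp_fg m hm t ht) (comp_gf m hm t ht)


end ChartAux

/-- The chart `U_{i₀}`, `2ℓ+1 ≤ i₀ ≤ n`, of the splitting model is already semi-stable:
it is, up to a polynomial factor, the standard ring with equation `a·b = r`. -/
theorem chart_semistable_iso (R : Type*) [CommRing R] (h2 : IsUnit (2 : R)) (r : R)
    (m : ℕ) (hm : 2 ≤ m) :
    Nonempty
      ((MvPolynomial (Fin m) R ⧸
          Ideal.span {X (⟨0, by omega⟩ : Fin m) *
            (2 * X (⟨m - 1, by omega⟩ : Fin m) +
              ∑ i ∈ (Finset.Ico 2 m).attach,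
                X (⟨i.1 - 1, by have h := i.2; rw [Finset.mem_Ico] at h; omega⟩ : Fin m) *
                  X (⟨m - i.1, by have h := i.2; rw [Finset.mem_Ico] at h; omega⟩ : Fin m)) -
            C r}) ≃ₐ[R]
        (MvPolynomial (Fin m) R ⧸
          Ideal.span {X (⟨0, by omega⟩ : Fin m) * X ⟨1, by omega⟩ - C r})) := by
  obtain ⟨t, ht⟩ : ∃ t : R, 2 * t = 1 :=
    ⟨↑h2.unit⁻¹, by have key := h2.unit.mul_inv; rwa [h2.unit_spec] at key⟩
  refine ⟨Ideal.quotientEquivAlg _ _ (chartEquiv m hm t ht) ?_⟩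
  rw [Ideal.map_span, Set.image_singleton]
  congr 1
  rw [Set.singleton_eq_singleton_iff]
  show X (⟨0, by omega⟩ : Fin m) * X ⟨1, by omega⟩ - C r =
    aeval (chartF m t) (X (⟨0, by omega⟩ : Fin m) * chartQ m hm - C r)
  rw [map_sub, map_mul, aeval_X, chartF_zero, aeval_f_Q m hm t ht, aeval_C,
    MvPolynomial.algebraMap_eq]
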